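/- Let A be a strongly ℤ-graded C*-algebra. The left action of A_0 on the Hilbert A_0-module X = A_1 (by left multiplication) is by adjointable operators, is injective, and takes values in the compact operators K(X). -/

import Mathlib

/-- A strong ℤ-grading of a C*-algebra `A`: closed subspaces `part n` (n ∈ ℤ) with
`part m * part n ⊆ part (m+n)`, `(part n)* = part (-n)`, densely spanning `A`, and
satisfying the strong-grading condition `cl span (part m * part n) = part (m+n)`. -/
structure StrongZGrading (A : Type*) [NonUnitalCStarAlgebra A] where
  part : ℤ → Submodule ℂ A
  closed : ∀ n, IsClosed (part n : Set A)
  mul_mem : ∀ {m n : ℤ} {a b : A}, a ∈ part m → b ∈ part n → a * b ∈ part (m + n)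
  star_mem : ∀ {n : ℤ} {a : A}, a ∈ part n → star a ∈ part (-n)
  span_dense : (⨆ n, part n).topologicalClosure = ⊤
  strong : ∀ m n : ℤ, (Submodule.span ℂ
      {x : A | ∃ a ∈ part m, ∃ b ∈ part n, x = a * b}).topologicalClosure = part (m + n)

/-- for a strongly ℤ-graded C*-algebra `A`, the left action of `A_0`
on the Hilbert `A_0`-module `X = A_1` (with `⟨x,y⟩ = x* y`) by left multiplication:
(i) maps `X` into `X` and is adjointable, with adjoint given by left multiplication
by `star a` (i.e. `⟨a·x, y⟩ = ⟨x, a*·y⟩`); (ii) is injective; and (iii) takes values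
in the compact operators `K(X)`: since `θ_{x,y}` is left multiplication by `x y*`,
every `a ∈ A_0` lies in the closed span of `{x y* : x, y ∈ X}`. -/
theorem strongZGrading_left_action_adjointable_injective_compact
    {A : Type*} [NonUnitalCStarAlgebra A] (gr : StrongZGrading A) :
    (∀ a ∈ gr.part 0, ∀ x ∈ gr.part 1, a * x ∈ gr.part 1) ∧
    (∀ a ∈ gr.part 0, ∀ x ∈ gr.part 1, ∀ y ∈ gr.part 1,
        star (a * x) * y = star x * (star a * y)) ∧
    (∀ a ∈ gr.part 0, (∀ x ∈ gr.part 1, a * x = 0) → a = 0) ∧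
    (∀ a ∈ gr.part 0, a ∈ (Submodule.span ℂ {z : A | ∃ x ∈ gr.part 1, ∃ y ∈ gr.part 1,
        z = x * star y}).topologicalClosure) := by

  refine ⟨fun a ha x hx => by simpa using gr.mul_mem ha hx,
    fun a _ x _ y _ => by rw [star_mul, mul_assoc],
    ?_, ?_⟩
  · intro a ha h
    -- left multiplication by `a` kills part 0, in particular `star a`
    set f : A →L[ℂ] A := ContinuousLinearMap.mul ℂ A a with hf
    have hker : gr.part 0 ≤ LinearMap.ker (f : A →ₗ[ℂ] A) := by
      have h10 := gr.strong 1 (-1)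
      norm_num at h10
      rw [← h10]
      refine Submodule.topologicalClosure_minimal _ ?_ (ContinuousLinearMap.isClosed_ker f)
      rw [Submodule.span_le]
      rintro z ⟨b, hb, c, hc, rfl⟩
      simp only [SetLike.mem_coe, LinearMap.mem_ker, ContinuousLinearMap.coe_coe, hf,
        ContinuousLinearMap.mul_apply']
      rw [← mul_assoc, h b hb, zero_mul]
    have hsa : star a ∈ gr.part 0 := by simpa using gr.star_mem ha
    have h0 : a * star a = 0 := hker hsa
    have := CStarRing.norm_self_mul_star (x := a)
    rw [h0, norm_zero] at this
    have : ‖a‖ = 0 := by nlinarith [norm_nonneg a]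
    exact norm_eq_zero.mp this
  · intro a ha
    have h10 := gr.strong 1 (-1)
    norm_num at h10
    have hset : {x : A | ∃ b ∈ gr.part 1, ∃ c ∈ gr.part (-1), x = b * c}
        = {z : A | ∃ x ∈ gr.part 1, ∃ y ∈ gr.part 1, z = x * star y} := by
      ext z
      constructor
      · rintro ⟨b, hb, c, hc, rfl⟩
        exact ⟨b, hb, star c, by simpa using gr.star_mem hc, by simp⟩
      · rintro ⟨x, hx, y, hy, rfl⟩
        exact ⟨x, hx, star y, by simpa using gr.star_mem hy, rfl⟩
    rw [← hset, h10]
    exact ha
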